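/- Suppose the weighted A-grading of S by w is nice, i.e. there exists an additive group homomorphism u' : A → ℤ with u'(w(i)) > 0 for every i ∈ σ. Let M be a finitely generated A-graded S-module, let 𝔪 ⊆ S be the ideal generated by the variables, and let s₁, …, s_d ∈ 𝔪 be homogeneous elements (each s_i lies in the degree-a_i component of S for some a_i ∈ A). If s₁, …, s_d is an M-regular sequence, then every permutation of s₁, …, s_d is also an M-regular sequence. -/

import Mathlib

open MvPolynomial

section Aux

open Pointwise

variable {K : Type} [Field K] {σ : Type} {A : Type} [AddCommGroup A] [DecidableEq A]
  {w : σ → A} (u' : A →+ ℤ)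

/-- a nonzero weighted-homogeneous polynomial has nonnegative `u'`-degree -/
theorem stmt16_deg_nonneg (hu : ∀ i : σ, 0 < u' (w i)) {s : MvPolynomial σ K} {e : A}
    (hs : s ∈ weightedHomogeneousSubmodule K w e) (h0 : s ≠ 0) : 0 ≤ u' e := by
  obtain ⟨d, hd⟩ := MvPolynomial.support_nonempty.mpr h0
  have hdeg : Finsupp.weight w d = e := hs (MvPolynomial.mem_support_iff.mp hd)
  rw [← hdeg, Finsupp.weight_apply, map_finsuppSum, Finsupp.sum]
  apply Finset.sum_nonneg
  intro i _
  rw [map_nsmul, nsmul_eq_mul]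
  exact mul_nonneg (Int.natCast_nonneg _) (le_of_lt (hu i))

/-- a nonzero weighted-homogeneous polynomial with zero constant term has
positive `u'`-degree -/
theorem stmt16_deg_pos (hu : ∀ i : σ, 0 < u' (w i)) {s : MvPolynomial σ K} {e : A}
    (hm : s ∈ Ideal.span (Set.range (X : σ → MvPolynomial σ K)))
    (hs : s ∈ weightedHomogeneousSubmodule K w e) (h0 : s ≠ 0) : 0 < u' e := by
  obtain ⟨d, hd⟩ := MvPolynomial.support_nonempty.mpr h0
  have hdeg : Finsupp.weight w d = e := hs (MvPolynomial.mem_support_iff.mp hd)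
  rw [← Set.image_univ] at hm
  obtain ⟨i, -, hi⟩ := MvPolynomial.mem_ideal_span_X_image.mp hm d hd
  rw [← hdeg, Finsupp.weight_apply, map_finsuppSum, Finsupp.sum]
  apply Finset.sum_pos'
  · intro j _
    rw [map_nsmul, nsmul_eq_mul]
    exact mul_nonneg (Int.natCast_nonneg _) (le_of_lt (hu j))
  · refine ⟨i, Finsupp.mem_support_iff.mpr hi, ?_⟩
    rw [map_nsmul, nsmul_eq_mul]
    have h1 := hu i
    have h2 : 1 ≤ (d i : ℤ) := by exact_mod_cast Nat.one_le_iff_ne_zero.mpr hi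
    nlinarith

variable {M : Type} [AddCommGroup M] [Module (MvPolynomial σ K) M]
  (ℳ : A → AddSubgroup M) [DirectSum.Decomposition ℳ]
  (hcompat : ∀ (a b : A) (s : MvPolynomial σ K) (m : M),
      s ∈ weightedHomogeneousSubmodule K w a → m ∈ ℳ b → s • m ∈ ℳ (a + b))

include hcompat

/-- decomposing a product of a homogeneous polynomial with a module element -/
theorem stmt16_decompose_smul {s : MvPolynomial σ K} {e : A}
    (hs : s ∈ weightedHomogeneousSubmodule K w e) (m : M) (δ : A) :
    (DirectSum.decompose ℳ (s • m) δ : M) = s • (DirectSum.decompose ℳ m (δ - e) : M) := by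
  induction m using DirectSum.Decomposition.inductionOn ℳ with
  | zero => simp
  | @homogeneous b x =>
    by_cases hδ : δ = e + b
    · have h1 : s • (x : M) ∈ ℳ δ := hδ ▸ hcompat e b s x hs x.2
      rw [DirectSum.decompose_of_mem_same ℳ h1,
        DirectSum.decompose_of_mem_same ℳ (show (x : M) ∈ ℳ (δ - e) by
          rw [hδ]; simpa using x.2)]
    · have h1 : s • (x : M) ∈ ℳ (e + b) := hcompat e b s x hs x.2
      rw [DirectSum.decompose_of_mem_ne ℳ h1 (fun h => hδ h.symm),
        DirectSum.decompose_of_mem_ne ℳ x.2 (fun h => hδ (by rw [h, add_sub_cancel])),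
        smul_zero]
  | add m₁ m₂ h₁ h₂ =>
    rw [smul_add, DirectSum.decompose_add, DirectSum.add_apply, AddSubgroup.coe_add,
      h₁, h₂, DirectSum.decompose_add, DirectSum.add_apply, AddSubgroup.coe_add, smul_add]

/-- degrees appearing in a finitely generated graded module are bounded below -/
theorem stmt16_bound (hu : ∀ i : σ, 0 < u' (w i))
    [Module.Finite (MvPolynomial σ K) M] :
    ∃ B : ℤ, ∀ (m : M) (δ : A), u' δ < B → (DirectSum.decompose ℳ m δ : M) = 0 := by
  classical
  obtain ⟨T, hT⟩ := Module.Finite.fg_top (R := MvPolynomial σ K) (M := M)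
  set C : Finset A := T.sup (fun t => DFinsupp.support (DirectSum.decompose ℳ t)) with hC
  refine ⟨-((C.sup (fun δ => (u' δ).natAbs) : ℕ) : ℤ) - 1, ?_⟩
  set B : ℤ := -((C.sup (fun δ => (u' δ).natAbs) : ℕ) : ℤ) - 1 with hB
  have hBC : ∀ δ ∈ C, B ≤ u' δ := by
    intro δ hδ
    have h1 : (u' δ).natAbs ≤ C.sup (fun δ => (u' δ).natAbs) :=
      Finset.le_sup (f := fun δ => (u' δ).natAbs) hδ
    omega
  -- the set of elements all of whose low-degree components vanish is a submodule
  letI := MvPolynomial.weightedDecomposition K w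
  set P : Submodule (MvPolynomial σ K) M :=
    { carrier := {m | ∀ δ : A, u' δ < B → (DirectSum.decompose ℳ m δ : M) = 0}
      zero_mem' := by intro δ _; simp
      add_mem' := by
        intro x y hx hy δ hδ
        rw [DirectSum.decompose_add, DirectSum.add_apply, AddSubgroup.coe_add,
          hx δ hδ, hy δ hδ, add_zero]
      smul_mem' := by
        intro s m hm
        induction s using DirectSum.Decomposition.inductionOn
          (weightedHomogeneousSubmodule K w) with
        | zero => intro δ _; simp
        | @homogeneous e x =>
          intro δ hδ
          rw [stmt16_decompose_smul ℳ hcompat x.2 m δ]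
          by_cases hx0 : (x : MvPolynomial σ K) = 0
          · simp [hx0]
          · have he : 0 ≤ u' e := stmt16_deg_nonneg u' hu x.2 hx0
            have : u' (δ - e) < B := by
              rw [map_sub]; omega
            rw [hm _ this, smul_zero]
        | add s₁ s₂ h₁ h₂ =>
          intro δ hδ
          rw [add_smul, DirectSum.decompose_add, DirectSum.add_apply, AddSubgroup.coe_add,
            h₁ δ hδ, h₂ δ hδ, add_zero] } with hP
  have hTP : (T : Set M) ⊆ P := by
    intro t ht δ hδ
    by_contra h0
    have : δ ∈ DFinsupp.support (DirectSum.decompose ℳ t) := by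
      rw [DFinsupp.mem_support_iff]
      exact fun h => h0 (by rw [h]; rfl)
    have : δ ∈ C := Finset.mem_sup.mpr ⟨t, ht, this⟩
    exact absurd (hBC δ this) (by omega)
  intro m δ hδ
  have hmP : m ∈ P := by
    have : (⊤ : Submodule (MvPolynomial σ K) M) ≤ P := by
      rw [← hT]; exact Submodule.span_le.mpr hTP
    exact this trivial
  exact hmP δ hδ

/-- a submodule of the form `I • ⊤` with `I` generated by homogeneous elements is graded -/
theorem stmt16_graded (rs : List (MvPolynomial σ K))
    (hrs : ∀ s ∈ rs, ∃ a : A, s ∈ weightedHomogeneousSubmodule K w a)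
    {m : M} (hm : m ∈ (Ideal.ofList rs • ⊤ : Submodule (MvPolynomial σ K) M)) (δ : A) :
    (DirectSum.decompose ℳ m δ : M) ∈ (Ideal.ofList rs • ⊤ : Submodule (MvPolynomial σ K) M) := by
  set P : Submodule (MvPolynomial σ K) M := Ideal.ofList rs • ⊤ with hPdef
  have main : ∀ r ∈ Ideal.ofList rs, ∀ (n : M) (δ : A),
      (DirectSum.decompose ℳ (r • n) δ : M) ∈ P := by
    intro r hr
    induction hr using Submodule.span_induction with
    | mem s hs =>
      intro n δ
      obtain ⟨e, he⟩ := hrs s hs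
      rw [stmt16_decompose_smul ℳ hcompat he n δ]
      exact Submodule.smul_mem_smul (Ideal.subset_span hs) trivial
    | zero => intro n δ; simp
    | add r₁ r₂ _ _ h₁ h₂ =>
      intro n δ
      rw [add_smul, DirectSum.decompose_add, DirectSum.add_apply, AddSubgroup.coe_add]
      exact P.add_mem (h₁ n δ) (h₂ n δ)
    | smul p r _ h =>
      intro n δ
      rw [smul_eq_mul, mul_comm, mul_smul]
      exact h (p • n) δ
  refine Submodule.smul_induction_on
    (p := fun m => ∀ δ : A, (DirectSum.decompose ℳ m δ : M) ∈ P) hm ?_ ?_ δ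
  · intro r hr n _
    exact main r hr n
  · intro x y hx hy δ'
    rw [DirectSum.decompose_add, DirectSum.add_apply, AddSubgroup.coe_add]
    exact P.add_mem (hx δ') (hy δ')

/-- the key "graded Nakayama"-type statement -/
theorem stmt16_key (hu : ∀ i : σ, 0 < u' (w i)) [Module.Finite (MvPolynomial σ K) M]
    {a : MvPolynomial σ K} {d : A} (ha : a ∈ weightedHomogeneousSubmodule K w d)
    (hd : 0 < u' d)
    (rs : List (MvPolynomial σ K))
    (hrs : ∀ s ∈ rs, ∃ e : A, s ∈ weightedHomogeneousSubmodule K w e)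
    {m : M} (hm : ∀ t : ℕ, ∃ m' : M,
      m - a ^ t • m' ∈ (Ideal.ofList rs • ⊤ : Submodule (MvPolynomial σ K) M)) :
    m ∈ (Ideal.ofList rs • ⊤ : Submodule (MvPolynomial σ K) M) := by
  classical
  obtain ⟨B, hB⟩ := stmt16_bound u' ℳ hcompat hu
  set P : Submodule (MvPolynomial σ K) M := Ideal.ofList rs • ⊤ with hPdef
  have hpow : ∀ t : ℕ, a ^ t ∈ weightedHomogeneousSubmodule K w (t • d) := by
    intro t
    induction t with
    | zero => simpa using isWeightedHomogeneous_one K w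
    | succ t ih =>
      rw [pow_succ, succ_nsmul]
      exact MvPolynomial.IsWeightedHomogeneous.mul ih ha
  have hcomp : ∀ δ : A, (DirectSum.decompose ℳ m δ : M) ∈ P := by
    intro δ
    obtain ⟨t, ht⟩ : ∃ t : ℕ, u' δ - (t : ℤ) * u' d < B := by
      refine ⟨(u' δ - B).toNat + 1, ?_⟩
      have h1 : (u' δ - B : ℤ) < ((u' δ - B).toNat + 1 : ℕ) := by
        omega
      nlinarith [Int.toNat_of_nonneg (le_of_lt hd)]
    obtain ⟨m', hm'⟩ := hm t
    have : m = a ^ t • m' + (m - a ^ t • m') := by abel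
    rw [this, DirectSum.decompose_add, DirectSum.add_apply, AddSubgroup.coe_add]
    refine P.add_mem ?_ (stmt16_graded ℳ hcompat rs hrs hm' δ)
    rw [stmt16_decompose_smul ℳ hcompat (hpow t) m' δ]
    have : u' (δ - t • d) < B := by
      rw [map_sub, map_nsmul]
      simpa [nsmul_eq_mul] using ht
    rw [hB m' _ this, smul_zero]
    exact P.zero_mem
  have := DirectSum.sum_support_decompose ℳ m
  rw [← this]
  exact Submodule.sum_mem P fun δ _ => hcomp δ

end Aux

open Pointwise

theorem stmt16 (K : Type) [Field K] (σ : Type) [Finite σ]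
    (A : Type) [AddCommGroup A] [DecidableEq A]
    (w : σ → A)
    -- the weighted `A`-grading of `S = K[xᵢ : i ∈ σ]` by `w` is "nice":
    (u' : A →+ ℤ) (hu : ∀ i : σ, 0 < u' (w i))
    -- `M` is a finitely generated `S`-module:
    (M : Type) [AddCommGroup M] [Module (MvPolynomial σ K) M]
    [Module.Finite (MvPolynomial σ K) M]
    -- equipped with an `A`-grading compatible with the grading of `S`:
    (ℳ : A → AddSubgroup M)
    (hdecomp : DirectSum.IsInternal ℳ)
    (hcompat : ∀ (a b : A) (s : MvPolynomial σ K) (m : M),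
      s ∈ weightedHomogeneousSubmodule K w a → m ∈ ℳ b → s • m ∈ ℳ (a + b))
    -- a list of homogeneous elements of the ideal `𝔪` generated by the variables:
    (l : List (MvPolynomial σ K))
    (hl : ∀ s ∈ l, s ∈ Ideal.span (Set.range (X : σ → MvPolynomial σ K)) ∧
      ∃ a : A, s ∈ weightedHomogeneousSubmodule K w a)
    -- which is an `M`-regular sequence:
    (hreg : RingTheory.Sequence.IsRegular M l)
    -- then every permutation of it is an `M`-regular sequence:
    (l' : List (MvPolynomial σ K)) (hperm : l.Perm l') :
    RingTheory.Sequence.IsRegular M l' := by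
  classical
  letI : DirectSum.Decomposition ℳ := hdecomp.chooseDecomposition
  constructor
  case top_ne_smul =>
    have : Ideal.ofList l' = Ideal.ofList l := by
      show Ideal.span _ = Ideal.span _
      congr 1
      ext r
      simp only [Set.mem_setOf_eq]
      exact (hperm.mem_iff).symm
    rw [this]
    exact hreg.top_ne_smul
  refine hreg.toIsWeaklyRegular.prototype_perm hperm ?_
  intro a b rs hsub
  intro K' hK
  clear_value K'
  have hal : a ∈ l := hsub.subset List.mem_cons_self
  have hrsl : ∀ s ∈ rs, s ∈ l := fun s hs =>
    hsub.subset (List.mem_cons_of_mem _ (List.mem_cons_of_mem _ hs))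
  obtain ⟨ha𝔪, d, had⟩ := hl a hal
  by_cases ha0 : a = 0
  · -- then K = a • K = 0
    refine le_bot_iff.mp ?_
    intro x hx
    rw [hK, ha0] at hx
    obtain ⟨y, -, hy⟩ := Set.mem_smul_set.mp hx
    simpa [← hy] using hy ▸ (zero_smul (MvPolynomial σ K) y).symm ▸ Submodule.mem_bot (MvPolynomial σ K) |>.mpr rfl
  have hd : 0 < u' d := stmt16_deg_pos u' hu ha𝔪 had ha0
  -- every element of K is divisible by arbitrary powers of a
  have hdiv : ∀ (t : ℕ), ∀ x ∈ K', ∃ y ∈ K', x = a ^ t • y := by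
    intro t
    induction t with
    | zero => intro x hx; exact ⟨x, hx, by simp⟩
    | succ t ih =>
      intro x hx
      have hx' : x ∈ a • K' := hK ▸ hx
      obtain ⟨z, hz, hzx⟩ := Set.mem_smul_set.mp hx'
      obtain ⟨y, hy, hzy⟩ := ih z hz
      exact ⟨y, hy, by rw [← hzx, hzy, pow_succ, mul_comm, mul_smul]⟩
  refine le_bot_iff.mp ?_
  intro n hn
  obtain ⟨m, rfl⟩ :=
    Submodule.mkQ_surjective (Ideal.ofList rs • ⊤ : Submodule (MvPolynomial σ K) M) n
  rw [Submodule.mem_bot]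
  rw [show (Ideal.ofList rs • ⊤ : Submodule (MvPolynomial σ K) M).mkQ m
      = Submodule.Quotient.mk m from rfl, Submodule.Quotient.mk_eq_zero]
  refine stmt16_key u' ℳ hcompat hu had hd rs (fun s hs => (hl s (hrsl s hs)).2) ?_
  intro t
  obtain ⟨y, -, hy⟩ := hdiv t _ hn
  obtain ⟨m', rfl⟩ :=
    Submodule.mkQ_surjective (Ideal.ofList rs • ⊤ : Submodule (MvPolynomial σ K) M) y
  refine ⟨m', ?_⟩
  rw [← Submodule.Quotient.mk_eq_zero]
  have : Submodule.Quotient.mk (p := (Ideal.ofList rs • ⊤ : Submodule (MvPolynomial σ K) M))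
        (m - a ^ t • m')
      = (Ideal.ofList rs • ⊤ : Submodule (MvPolynomial σ K) M).mkQ m
        - a ^ t • (Ideal.ofList rs • ⊤ : Submodule (MvPolynomial σ K) M).mkQ m' := by
    simp [Submodule.Quotient.mk_sub, Submodule.Quotient.mk_smul]
  rw [this, ← hy, sub_self]
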